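/- For every x ∈ (0, 1/2], the function Ψ satisfies the functional equation Ψ(x) = 2x + T(x)·Ψ(I(x)); note that I(x) ∈ [0, 1/2], so the right-hand side is defined. Moreover Ψ(0) = 0. -/

import Mathlib

/-- `T(x) = x·(1 + {1/x})` for `x ≠ 0`, `T(0) = 0`. -/
noncomputable def Tmap (x : ℝ) : ℝ := if x = 0 then 0 else x * (1 + Int.fract (1 / x))

/-- `I(x) = {1/x} / (1 + {1/x})` for `x ≠ 0`, `I(0) = 0`. -/
noncomputable def Imap (x : ℝ) : ℝ :=
  if x = 0 then 0 else Int.fract (1 / x) / (1 + Int.fract (1 / x))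

/-- `Ψ(x) = 2x + 2·Σ_{j ≥ 1} T(x)·T(I(x))·⋯·T(I^{j-1}(x))·I^{j}(x)`. -/
noncomputable def Psi (x : ℝ) : ℝ :=
  2 * x + 2 * ∑' j : ℕ, (∏ i ∈ Finset.range (j + 1), Tmap (Imap^[i] x)) * Imap^[j + 1] x

lemma Imap_mem (x : ℝ) : Imap x ∈ Set.Icc (0:ℝ) (1/2) := by
  unfold Imap
  split_ifs with h
  · norm_num
  · have h0 : 0 ≤ Int.fract (1/x) := Int.fract_nonneg _
    have h1 : Int.fract (1/x) < 1 := Int.fract_lt_one _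
    constructor
    · exact div_nonneg h0 (by linarith)
    · rw [div_le_iff₀ (by linarith)]
      linarith

lemma iter_mem {x : ℝ} (hx : x ∈ Set.Icc (0:ℝ) (1/2)) (i : ℕ) :
    Imap^[i] x ∈ Set.Icc (0:ℝ) (1/2) := by
  cases i with
  | zero => exact hx
  | succ n => rw [Function.iterate_succ_apply']; exact Imap_mem _

lemma Tmap_nonneg {t : ℝ} (ht : 0 ≤ t) : 0 ≤ Tmap t := by
  unfold Tmap
  split_ifs with h
  · exact le_rfl
  · have := Int.fract_nonneg (1/t)
    have := lt_of_le_of_ne ht (Ne.symm h)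
    nlinarith

lemma Tmap_le {t : ℝ} (ht : t ∈ Set.Icc (0:ℝ) (1/2)) : Tmap t ≤ 2/3 := by
  unfold Tmap
  split_ifs with h
  · norm_num
  · have ht0 : 0 < t := lt_of_le_of_ne ht.1 (Ne.symm h)
    have hu : (2:ℝ) ≤ 1/t := by
      rw [le_div_iff₀ ht0]; linarith [ht.2]
    have htu : t * (1/t) = 1 := by field_simp
    set u := 1/t with hudef
    set N : ℝ := ((⌊u⌋ : ℤ) : ℝ) with hN
    have hN2 : (2:ℝ) ≤ N := by
      have : (2:ℤ) ≤ ⌊u⌋ := Int.le_floor.mpr (by exact_mod_cast hu)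
      rw [hN]; exact_mod_cast this
    have hfr : Int.fract u = u - N := rfl
    have hup : u < N + 1 := Int.lt_floor_add_one u
    have h1 : 1 < t * (N+1) := by
      calc 1 = t * u := htu.symm
      _ < t * (N+1) := by exact mul_lt_mul_of_pos_left hup ht0
    rw [hfr]
    have key : t * (1 + (u - N)) = 1 + t - t * N := by
      have : t * u = 1 := htu
      nlinarith [this]
    rw [key]
    nlinarith [mul_nonneg (le_of_lt (sub_pos.mpr h1)) (show (0:ℝ) ≤ N - 1 by linarith)]

lemma summ {x : ℝ} (hx : x ∈ Set.Icc (0:ℝ) (1/2)) :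
    Summable (fun j : ℕ => (∏ i ∈ Finset.range (j+1), Tmap (Imap^[i] x)) * Imap^[j+1] x) := by
  have hg : Summable (fun j : ℕ => (2/3:ℝ)^(j+1)) := by
    have h : Summable (fun j : ℕ => (2/3:ℝ)^j) :=
      summable_geometric_of_lt_one (by norm_num) (by norm_num)
    simpa [pow_succ] using h.mul_right (2/3:ℝ)
  refine Summable.of_nonneg_of_le ?_ ?_ hg
  · intro j
    exact mul_nonneg (Finset.prod_nonneg fun i _ => Tmap_nonneg (iter_mem hx i).1)
      (iter_mem hx (j+1)).1
  · intro j
    calc (∏ i ∈ Finset.range (j+1), Tmap (Imap^[i] x)) * Imap^[j+1] x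
        ≤ (∏ i ∈ Finset.range (j+1), (2/3:ℝ)) * 1 := by
          apply mul_le_mul
          · exact Finset.prod_le_prod (fun i _ => Tmap_nonneg (iter_mem hx i).1)
              (fun i _ => Tmap_le (iter_mem hx i))
          · linarith [(iter_mem hx (j+1)).2]
          · exact (iter_mem hx (j+1)).1
          · positivity
      _ = (2/3:ℝ)^(j+1) := by rw [Finset.prod_const, Finset.card_range, mul_one]

theorem stmt_12 :
    (∀ x ∈ Set.Ioc (0 : ℝ) (1 / 2),
      Imap x ∈ Set.Icc (0 : ℝ) (1 / 2) ∧ Psi x = 2 * x + Tmap x * Psi (Imap x)) ∧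
    Psi 0 = 0 := by
  constructor
  · intro x hx
    have hx' : x ∈ Set.Icc (0:ℝ) (1/2) := ⟨hx.1.le, hx.2⟩
    refine ⟨Imap_mem x, ?_⟩
    set a : ℕ → ℝ := fun j => (∏ i ∈ Finset.range (j+1), Tmap (Imap^[i] x)) * Imap^[j+1] x
      with ha
    set b : ℕ → ℝ := fun j =>
      (∏ i ∈ Finset.range (j+1), Tmap (Imap^[i] (Imap x))) * Imap^[j+1] (Imap x) with hb
    have hsum : Summable a := summ hx'
    have hshift : ∀ j : ℕ, a (j+1) = Tmap x * b j := by
      intro j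
      simp only [ha, hb]
      rw [Finset.prod_range_succ']
      simp only [Function.iterate_succ_apply, Function.iterate_zero_apply]
      ring
    have h0 : ∑' j, a j = a 0 + ∑' j, a (j+1) := Summable.tsum_eq_zero_add hsum
    have h1 : ∑' j, a (j+1) = Tmap x * ∑' j, b j := by
      simp only [hshift]
      exact tsum_mul_left
    have ha0 : a 0 = Tmap x * Imap x := by simp [ha]
    show 2 * x + 2 * ∑' j, a j = 2 * x + Tmap x * (2 * Imap x + 2 * ∑' j, b j)
    rw [h0, h1, ha0]; ring
  · have h : Imap 0 = 0 := by simp [Imap]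
    have hiter : ∀ j : ℕ, Imap^[j] (0:ℝ) = 0 := fun j => Function.iterate_fixed h j
    simp only [Psi, hiter, mul_zero, tsum_zero]
    ring
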